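/- Let k < 0 be an integer, σ > 0, ξ ∈ ℝ, L > 0. If a bounded continuous function f : ℝ → ℂ satisfies the ODE −(2πk/L + η) f'(η) = (iξη + σ²η²/2) f(η) on (−∞, −2πk/L), then f ≡ 0 on (−∞, −2πk/L). -/

import Mathlib

open Real Complex Set Filter Topology

theorem bounded_solution_vanishes
    (k : ℤ) (hk : k < 0) (σ ξ L : ℝ) (hσ : 0 < σ) (hL : 0 < L)
    (f : ℝ → ℂ) (hbdd : ∃ M : ℝ, ∀ η : ℝ, ‖f η‖ ≤ M)
    (hcont : Continuous f)
    (hdiff : ∀ η ∈ Set.Iio (-(2 * Real.pi * (k : ℝ) / L)), DifferentiableAt ℝ f η)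
    (hode : ∀ η ∈ Set.Iio (-(2 * Real.pi * (k : ℝ) / L)),
      -(((2 * Real.pi * (k : ℝ) / L : ℝ) : ℂ) + (η : ℂ)) * deriv f η
        = (Complex.I * (ξ : ℂ) * (η : ℂ) + (σ : ℂ) ^ 2 * (η : ℂ) ^ 2 / 2) * f η) :
    ∀ η ∈ Set.Iio (-(2 * Real.pi * (k : ℝ) / L)), f η = 0 := by
  have hπ := Real.pi_pos
  set a : ℝ := -(2 * Real.pi * (k : ℝ) / L) with ha_def
  have ha : 0 < a := by
    have hk' : (k : ℝ) < 0 := by exact_mod_cast hk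
    have h1 : 2 * Real.pi * (k : ℝ) < 0 := by nlinarith
    have h2 : 2 * Real.pi * (k : ℝ) / L < 0 := div_neg_of_neg_of_pos h1 hL
    rw [ha_def]
    linarith
  -- real and imaginary parts of the antiderivative G
  set P : ℝ → ℝ := fun y => -(σ ^ 2 / 4) * y ^ 2 + -(σ ^ 2 * a / 2) * y
      + -(σ ^ 2 * a ^ 2 / 2) * Real.log (a - y) with hP_def
  set Q : ℝ → ℝ := fun y => -ξ * y + -(ξ * a) * Real.log (a - y) with hQ_def
  set G : ℝ → ℂ := fun y => (P y : ℂ) + (Q y : ℂ) * Complex.I with hG_def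
  set g : ℝ → ℂ := fun y =>
    (Complex.I * (ξ : ℂ) * (y : ℂ) + (σ : ℂ) ^ 2 * (y : ℂ) ^ 2 / 2) / ((a : ℂ) - (y : ℂ))
    with hg_def
  have hlogder : ∀ y ∈ Set.Iio a, HasDerivAt (fun z : ℝ => Real.log (a - z)) (-(a - y)⁻¹) y := by
    intro y hy
    have hpos : 0 < a - y := sub_pos.mpr hy
    have h1 : HasDerivAt (fun z : ℝ => a - z) (-1) y := by
      simpa using (hasDerivAt_id y).const_sub a
    have := (Real.hasDerivAt_log (ne_of_gt hpos)).comp y h1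
    exact this.congr_deriv (by ring)
  have hGder : ∀ y ∈ Set.Iio a, HasDerivAt G (g y) y := by
    intro y hy
    have hpos : 0 < a - y := sub_pos.mpr hy
    have hne : ((a : ℂ) - (y : ℂ)) ≠ 0 := by
      rw [← Complex.ofReal_sub]
      exact_mod_cast Complex.ofReal_ne_zero.mpr (ne_of_gt hpos)
    have hP' : HasDerivAt P
        (-(σ ^ 2 / 4) * (2 * y) + -(σ ^ 2 * a / 2) + -(σ ^ 2 * a ^ 2 / 2) * -(a - y)⁻¹) y := by
      have h1 : HasDerivAt (fun z : ℝ => z ^ 2) (2 * y) y := by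
        simpa [mul_comm] using (hasDerivAt_pow 2 y)
      exact ((h1.const_mul _).add ((hasDerivAt_id y).const_mul _ |>.congr_deriv (by ring))).add
        (((hlogder y hy).const_mul _))
    have hQ' : HasDerivAt Q (-ξ + -(ξ * a) * -(a - y)⁻¹) y := by
      exact (((hasDerivAt_id y).const_mul (-ξ)).congr_deriv (by ring)).add
        ((hlogder y hy).const_mul _)
    have hG' : HasDerivAt G
        (((-(σ ^ 2 / 4) * (2 * y) + -(σ ^ 2 * a / 2) + -(σ ^ 2 * a ^ 2 / 2) * -(a - y)⁻¹ : ℝ) : ℂ)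
          + ((-ξ + -(ξ * a) * -(a - y)⁻¹ : ℝ) : ℂ) * Complex.I) y :=
      (hP'.ofReal_comp).add ((hQ'.ofReal_comp).mul_const Complex.I)
    convert hG' using 1
    rw [hg_def, div_eq_iff hne]
    push_cast
    field_simp
    ring
  -- the function f * exp(-G) has zero derivative on Iio a
  set H : ℝ → ℂ := fun y => f y * Complex.exp (-G y) with hH_def
  have hHder : ∀ y ∈ Set.Iio a, HasDerivAt H 0 y := by
    intro y hy
    have hpos : 0 < a - y := sub_pos.mpr hy
    have hne : ((a : ℂ) - (y : ℂ)) ≠ 0 := by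
      rw [← Complex.ofReal_sub]
      exact_mod_cast Complex.ofReal_ne_zero.mpr (ne_of_gt hpos)
    have hode' : deriv f y = g y * f y := by
      have h0 := hode y hy
      have hco : -(((2 * Real.pi * (k : ℝ) / L : ℝ) : ℂ) + (y : ℂ)) = (a : ℂ) - (y : ℂ) := by
        rw [ha_def]; push_cast; ring
      rw [hco] at h0
      rw [hg_def, div_mul_eq_mul_div, eq_div_iff hne]
      linear_combination h0
    have hf' : HasDerivAt f (g y * f y) y := by
      rw [← hode']; exact (hdiff y hy).hasDerivAt
    have hexp : HasDerivAt (fun z : ℝ => Complex.exp (-G z)) (Complex.exp (-G y) * (-g y)) y :=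
      ((hGder y hy).neg).cexp
    have := hf'.mul hexp
    exact this.congr_deriv (by ring)
  -- H is constant on Iio a
  have hconst : ∀ y ∈ Set.Iio a, ∀ z ∈ Set.Iio a, H y = H z := by
    intro y hy z hz
    have hdiffOn : DifferentiableOn ℝ H (Set.Iio a) := fun w hw =>
      ((hHder w hw).differentiableAt).differentiableWithinAt
    refine (convex_Iio a).is_const_of_fderivWithin_eq_zero hdiffOn ?_ hy hz
    intro w hw
    have h1 : fderivWithin ℝ H (Set.Iio a) w = fderiv ℝ H w :=
      fderivWithin_of_isOpen isOpen_Iio hw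
    rw [h1, (hHder w hw).hasFDerivAt.fderiv]
    ext t
    simp
  -- use boundedness: |H η₀| ≤ M * exp (-(P y)) for all y < a
  intro η₀ hη₀
  obtain ⟨M, hM⟩ := hbdd
  have habsH : ∀ y ∈ Set.Iio a, ‖H y‖ ≤ M * Real.exp (-(P y)) := by
    intro y hy
    have : ‖H y‖ = ‖f y‖ * Real.exp (-(G y).re) := by
      rw [hH_def]
      simp [Complex.norm_exp]
    rw [this]
    have hre : (G y).re = P y := by simp [hG_def]
    rw [hre]
    have h1 : ‖f y‖ ≤ M := hM y
    have h2 : (0:ℝ) < Real.exp (-(P y)) := Real.exp_pos _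
    nlinarith [norm_nonneg (f y), Real.exp_pos (-(P y))]
  -- P tends to +∞ as y → a⁻
  have hPtop : Tendsto P (𝓝[<] a) atTop := by
    have hsub : Tendsto (fun y : ℝ => a - y) (𝓝[<] a) (𝓝[>] 0) := by
      apply tendsto_nhdsWithin_of_tendsto_nhds_of_eventually_within
      · have : Tendsto (fun y : ℝ => a - y) (𝓝 a) (𝓝 (a - a)) :=
          (tendsto_const_nhds.sub tendsto_id)
        simpa using this.mono_left nhdsWithin_le_nhds
      · filter_upwards [self_mem_nhdsWithin] with y hy
        exact sub_pos.mpr (mem_Iio.mp hy)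
    have hlog : Tendsto (fun y : ℝ => Real.log (a - y)) (𝓝[<] a) atBot :=
      Real.tendsto_log_nhdsGT_zero.comp hsub
    have hc : -(σ ^ 2 * a ^ 2 / 2) < 0 := by
      have : 0 < σ ^ 2 * a ^ 2 / 2 := by positivity
      linarith
    have hmain : Tendsto (fun y : ℝ => -(σ ^ 2 * a ^ 2 / 2) * Real.log (a - y)) (𝓝[<] a) atTop :=
      (tendsto_const_mul_atTop_of_neg hc).mpr hlog
    have hpoly : Tendsto (fun y : ℝ => -(σ ^ 2 / 4) * y ^ 2 + -(σ ^ 2 * a / 2) * y) (𝓝[<] a)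
        (𝓝 (-(σ ^ 2 / 4) * a ^ 2 + -(σ ^ 2 * a / 2) * a)) := by
      apply Filter.Tendsto.mono_left _ nhdsWithin_le_nhds
      exact ((continuous_const.mul (continuous_pow 2)).add
        (continuous_const.mul continuous_id)).tendsto a
    exact hpoly.add_atTop hmain
  -- conclude |H η₀| = 0
  have hHzero : ‖H η₀‖ = 0 := by
    have hne : NeBot (𝓝[<] a) := nhdsLT_neBot a
    have htend : Tendsto (fun y : ℝ => M * Real.exp (-(P y))) (𝓝[<] a) (𝓝 (M * 0)) := by
      apply Filter.Tendsto.const_mul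
      exact Real.tendsto_exp_atBot.comp (Filter.tendsto_neg_atTop_atBot.comp hPtop)
    rw [mul_zero] at htend
    have hev : ∀ᶠ y in 𝓝[<] a, ‖H η₀‖ ≤ M * Real.exp (-(P y)) := by
      filter_upwards [self_mem_nhdsWithin] with y hy
      rw [hconst η₀ hη₀ y hy]
      exact habsH y hy
    have := ge_of_tendsto htend hev
    exact le_antisymm this (norm_nonneg _)
  have hH0 : H η₀ = 0 := by
    rwa [norm_eq_zero] at hHzero
  have hexpne : Complex.exp (-G η₀) ≠ 0 := Complex.exp_ne_zero _
  rw [hH_def] at hH0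
  exact (mul_eq_zero.mp hH0).resolve_right hexpne
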